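/- Let A = ⟨Q, Σ₀ ∪ {a}⟩ be a standardized almost group automaton with e = excl(a), d = dupl(a), and e ≠ d. Then e and d lie in the same strongly connected component of Γ₁(A); in particular C_e is not a singleton. -/

import Mathlib

/-- The transformation monoid generated by the permutation letters S0 and the
defect-1 letter a. -/
def Mgen {Q : Type*} (S0 : Set (Equiv.Perm Q)) (a : Function.End Q) :
    Submonoid (Function.End Q) :=
  Submonoid.closure ((fun σ : Equiv.Perm Q => (⇑σ : Function.End Q)) '' S0 ∪ {a})

/-- Edges of the Rystsov graph Γ₁(A). -/
def edge {Q : Type*} (S0 : Set (Equiv.Perm Q)) (a : Function.End Q)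
    (q p : Q) : Prop :=
  ∃ w ∈ Mgen S0 a, ((Set.range (w : Q → Q))ᶜ : Set Q) = {q} ∧
    {x : Q | ∃ y z : Q, y ≠ z ∧ w y = x ∧ w z = x} = {p}

/-- The strongly connected component of q in Γ₁(A). -/
def scc {Q : Type*} (S0 : Set (Equiv.Perm Q)) (a : Function.End Q)
    (q : Q) : Set Q :=
  {p : Q | Relation.ReflTransGen (edge S0 a) q p ∧
    Relation.ReflTransGen (edge S0 a) p q}

/-- In a finite group, the subgroup closure coincides with the submonoid
closure (inverses are positive powers). -/
lemma subgroup_closure_subset_submonoid {G : Type*} [Group G] [Finite G] (S : Set G) :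
    (Subgroup.closure S : Set G) ⊆ (Submonoid.closure S : Set G) := by
  have hinv : ∀ y ∈ Submonoid.closure S, y⁻¹ ∈ Submonoid.closure S := by
    intro y hy
    have hpos : 0 < orderOf y := orderOf_pos y
    have h1 : y * y ^ (orderOf y - 1) = 1 := by
      rw [← pow_succ', Nat.sub_add_cancel hpos, pow_orderOf_eq_one]
    have : y⁻¹ = y ^ (orderOf y - 1) := by
      exact inv_eq_of_mul_eq_one_right h1
    rw [this]
    exact pow_mem hy _
  let K : Subgroup G :=
    { Submonoid.closure S with inv_mem' := fun {x} hx => hinv x hx }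
  have : Subgroup.closure S ≤ K := Subgroup.closure_le K |>.mpr Submonoid.subset_closure
  exact this

/-- The coercion of permutations into the full transformation monoid. -/
def permEndHom (Q : Type*) : Equiv.Perm Q →* Function.End Q where
  toFun σ := ⇑σ
  map_one' := rfl
  map_mul' _ _ := rfl

/-- Each word a·σ (for σ in the group generated by S0) has defect 1 and yields
an edge σ(e) → σ(d) in Γ₁(A). -/
lemma edge_of {Q : Type*} [Fintype Q] (S0 : Set (Equiv.Perm Q))
    (a : Function.End Q) (e d : Q)
    (ha : ((Set.range (a : Q → Q))ᶜ : Set Q) = {e})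
    (hd : {x : Q | ∃ y z : Q, y ≠ z ∧ a y = x ∧ a z = x} = {d})
    (σ : Equiv.Perm Q) (hσ : σ ∈ Subgroup.closure S0) :
    edge S0 a (σ e) (σ d) := by
  refine ⟨(permEndHom Q σ) * a, ?_, ?_, ?_⟩
  · apply Submonoid.mul_mem
    · have hm := subgroup_closure_subset_submonoid S0 hσ
      have h2 : permEndHom Q σ ∈ (Submonoid.closure S0).map (permEndHom Q) :=
        Submonoid.mem_map_of_mem _ hm
      rw [MonoidHom.map_mclosure] at h2
      exact Submonoid.closure_mono Set.subset_union_left h2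
    · exact Submonoid.subset_closure (Or.inr rfl)
  · have hr : Set.range ((permEndHom Q σ * a : Function.End Q) : Q → Q)
        = σ '' Set.range (a : Q → Q) := by
      show Set.range ((σ : Q → Q) ∘ (a : Q → Q)) = _
      exact Set.range_comp _ _
    rw [hr, ← Equiv.image_compl, ha, Set.image_singleton]
  · ext x
    simp only [Set.mem_setOf_eq, Set.mem_singleton_iff]
    constructor
    · rintro ⟨y, z, hyz, h1, h2⟩
      have h1' : a y = σ.symm x := by
        have : σ (a y) = x := h1
        simp [← this]
      have h2' : a z = σ.symm x := by
        have : σ (a z) = x := h2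
        simp [← this]
      have : σ.symm x ∈ {x : Q | ∃ y z : Q, y ≠ z ∧ a y = x ∧ a z = x} := ⟨y, z, hyz, h1', h2'⟩
      rw [hd, Set.mem_singleton_iff] at this
      rw [← this]; simp
    · rintro rfl
      have : d ∈ {x : Q | ∃ y z : Q, y ≠ z ∧ a y = x ∧ a z = x} := by rw [hd]; rfl
      obtain ⟨y, z, hyz, h1, h2⟩ := this
      exact ⟨y, z, hyz, by show σ (a y) = σ d; rw [h1], by show σ (a z) = σ d; rw [h2]⟩

/-- In a standardized almost group automaton, the excluded state e and the
duplicated state d of a lie in the same strongly connected component of Γ₁(A);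
in particular C_e is not a singleton. -/
theorem stmt14 {Q : Type*} [Fintype Q] (S0 : Set (Equiv.Perm Q))
    (a : Function.End Q) (e d : Q)
    (ha : ((Set.range (a : Q → Q))ᶜ : Set Q) = {e})
    (hd : {x : Q | ∃ y z : Q, y ≠ z ∧ a y = x ∧ a z = x} = {d})
    (hstd : ∃ p : Q, p ≠ e ∧ a p = a e)
    (hed : e ≠ d)
    (htrans : ∀ p q : Q, ∃ σ ∈ Subgroup.closure S0, σ p = q) :
    d ∈ scc S0 a e ∧ ∀ q : Q, scc S0 a e ≠ {q} := by
  obtain ⟨σ, hσ, hσe⟩ := htrans e d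
  have key : ∀ i : ℕ, edge S0 a ((σ ^ i) e) ((σ ^ (i + 1)) e) := by
    intro i
    have h := edge_of S0 a e d ha hd (σ ^ i) (pow_mem hσ i)
    have h2 : (σ ^ i) d = (σ ^ (i + 1)) e := by
      rw [pow_succ, Equiv.Perm.mul_apply, hσe]
    rwa [h2] at h
  have hreach : ∀ j : ℕ,
      Relation.ReflTransGen (edge S0 a) ((σ ^ 1) e) ((σ ^ (j + 1)) e) := by
    intro j
    induction j with
    | zero => exact .refl
    | succ k ih => exact ih.tail (key (k + 1))
  have hde : Relation.ReflTransGen (edge S0 a) d e := by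
    have h := hreach (orderOf σ - 1)
    rw [Nat.sub_add_cancel (orderOf_pos σ)] at h
    have h2 : (σ ^ 1) e = d := by rw [pow_one, hσe]
    have h3 : (σ ^ orderOf σ) e = e := by rw [pow_orderOf_eq_one]; rfl
    rwa [h2, h3] at h
  have hedge : Relation.ReflTransGen (edge S0 a) e d := by
    have h := edge_of S0 a e d ha hd 1 (one_mem _)
    simp only [Equiv.Perm.one_apply] at h
    exact .single h
  have hdm : d ∈ scc S0 a e := ⟨hedge, hde⟩
  refine ⟨hdm, fun q hq => ?_⟩
  have hem : e ∈ scc S0 a e := ⟨.refl, .refl⟩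
  rw [hq, Set.mem_singleton_iff] at hem hdm
  exact hed (hem.trans hdm.symm)
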